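/- Let $U\in\mathbb{R}^{m\times r}$ and $V\in\mathbb{R}^{n\times r}$. Then $U^\top U = V^\top V$ if and only if $U$ and $V$ have the same vector of singular values (counted with multiplicity, padded with zeros to length $r$) and for any singular value decomposition $V = P\,\widetilde{\mathrm{Diag}}(\sigma(V))\,Q^\top$ with $P\in\mathcal{O}^n$, $Q\in\mathcal{O}^r$, there exists $R\in\mathcal{O}^m$ such that $U = R\,\widetilde{\mathrm{Diag}}(\sigma(U))\,Q^\top$. -/

import Mathlib

open Matrix Finset

def mdot {m n : ℕ} (A B : Matrix (Fin m) (Fin n) ℝ) : ℝ := ∑ i, ∑ j, A i j * B i j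

noncomputable def frob {m n : ℕ} (A : Matrix (Fin m) (Fin n) ℝ) : ℝ := Real.sqrt (mdot A A)

def IsOrth {k : ℕ} (R : Matrix (Fin k) (Fin k) ℝ) : Prop := Rᵀ * R = 1

def rdg (a b : ℕ) {c : ℕ} (x : Fin c → ℝ) : Matrix (Fin a) (Fin b) ℝ :=
  Matrix.of fun i j => if h : (i : ℕ) = (j : ℕ) ∧ (i : ℕ) < c then x ⟨i, h.2⟩ else 0

noncomputable def descSort {k : ℕ} (f : Fin k → ℝ) : Fin k → ℝ := fun i => f (Tuple.sort f i.rev)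

theorem Matrix.isHermitian_transpose_mul_self {m n : Type*} [Fintype m] (A : Matrix m n ℝ) :
    (Aᵀ * A).IsHermitian := by
  rw [Matrix.IsHermitian, Matrix.conjTranspose_eq_transpose_of_trivial, Matrix.transpose_mul,
    Matrix.transpose_transpose]

noncomputable def sigCol {a r : ℕ} (X : Matrix (Fin a) (Fin r) ℝ) : Fin r → ℝ :=
  descSort fun i => Real.sqrt ((Matrix.isHermitian_transpose_mul_self X).eigenvalues i)

noncomputable def sigRow {a b : ℕ} (X : Matrix (Fin a) (Fin b) ℝ) : Fin a → ℝ :=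
  descSort fun i => Real.sqrt ((Matrix.isHermitian_mul_conjTranspose_self X).eigenvalues i)

noncomputable def toDual {m n : ℕ} (G : Matrix (Fin m) (Fin n) ℝ) :
    Matrix (Fin m) (Fin n) ℝ →L[ℝ] ℝ :=
  LinearMap.toContinuousLinearMap
    { toFun := fun Y => mdot G Y
      map_add' := fun Y Z => by
        simp [mdot, Matrix.add_apply, mul_add, Finset.sum_add_distrib]
      map_smul' := fun c Y => by
        simp [mdot, Matrix.smul_apply, smul_eq_mul, Finset.mul_sum, mul_left_comm] }

noncomputable def enorm2 {k : ℕ} (v : Fin k → ℝ) : ℝ := Real.sqrt (∑ i, v i ^ 2)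

def subdiff {m n : ℕ} (f : Matrix (Fin m) (Fin n) ℝ → ℝ) (X : Matrix (Fin m) (Fin n) ℝ) :
    Set (Matrix (Fin m) (Fin n) ℝ) := {G | ∀ Y, f X + mdot G (Y - X) ≤ f Y}

/-! ### Auxiliary lemmas -/

lemma gram_dot {m r : ℕ} (A : Matrix (Fin m) (Fin r) ℝ) (x y : Fin r → ℝ) :
    (A *ᵥ x) ⬝ᵥ (A *ᵥ y) = x ⬝ᵥ ((Aᵀ * A) *ᵥ y) := by
  rw [← Matrix.vecMul_transpose, Matrix.dotProduct_mulVec, Matrix.vecMul_vecMul,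
    Matrix.dotProduct_mulVec]

noncomputable def eLin {m r : ℕ} (A : Matrix (Fin m) (Fin r) ℝ) :
    EuclideanSpace ℝ (Fin r) →ₗ[ℝ] EuclideanSpace ℝ (Fin m) where
  toFun x := WithLp.toLp 2 (A *ᵥ x)
  map_add' x y := by simp [Matrix.mulVec_add]
  map_smul' c x := by simp [Matrix.mulVec_smul]

lemma eLin_apply {m r : ℕ} (A : Matrix (Fin m) (Fin r) ℝ) (x : EuclideanSpace ℝ (Fin r)) :
    eLin A x = A *ᵥ x := rfl

lemma inner_eLin {m r : ℕ} (A : Matrix (Fin m) (Fin r) ℝ) (x y : EuclideanSpace ℝ (Fin r)) :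
    inner ℝ (eLin A x) (eLin A y) = (x : Fin r → ℝ) ⬝ᵥ ((Aᵀ * A) *ᵥ y) := by
  rw [← gram_dot]
  simp [PiLp.inner_apply, eLin_apply, dotProduct, RCLike.inner_apply, mul_comm]

/-- If two matrices with the same number of columns and rows have equal Gram matrices,
they differ by an orthogonal transformation on the left. -/
lemma exists_orth_factor {m r : ℕ} (A B : Matrix (Fin m) (Fin r) ℝ)
    (h : Aᵀ * A = Bᵀ * B) : ∃ R : Matrix (Fin m) (Fin m) ℝ, IsOrth R ∧ A = R * B := by
  have hinner : ∀ x y, inner ℝ (eLin A x) (eLin A y) = (inner ℝ (eLin B x) (eLin B y) : ℝ) := by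
    intro x y; rw [inner_eLin, inner_eLin, h]
  have hnorm : ∀ x, ‖eLin A x‖ = ‖eLin B x‖ := by
    intro x
    have := hinner x x
    rw [real_inner_self_eq_norm_sq, real_inner_self_eq_norm_sq] at this
    exact (sq_eq_sq₀ (norm_nonneg _) (norm_nonneg _)).mp this
  have hker : LinearMap.ker (eLin B) ≤ LinearMap.ker (eLin A) := by
    intro x hx
    rw [LinearMap.mem_ker] at hx ⊢
    have : ‖eLin A x‖ = 0 := by rw [hnorm, hx, norm_zero]
    exact norm_eq_zero.mp this
  set S := LinearMap.range (eLin B) with hS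
  let φ : S →ₗ[ℝ] EuclideanSpace ℝ (Fin m) :=
    ((LinearMap.ker (eLin B)).liftQ (eLin A) hker).comp
      (LinearMap.quotKerEquivRange (eLin B)).symm.toLinearMap
  have hφ : ∀ x : EuclideanSpace ℝ (Fin r),
      φ ⟨eLin B x, LinearMap.mem_range_self _ x⟩ = eLin A x := by
    intro x
    simp only [φ, LinearMap.comp_apply, LinearEquiv.coe_toLinearMap]
    rw [LinearMap.quotKerEquivRange_symm_apply_image (eLin B) x (LinearMap.mem_range_self _ x)]
    simp only [Submodule.mkQ_apply, Submodule.liftQ_apply]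
  have hφnorm : ∀ s : S, ‖φ s‖ = ‖s‖ := by
    rintro ⟨-, x, rfl⟩
    rw [hφ x, hnorm x]
    rfl
  let L : S →ₗᵢ[ℝ] EuclideanSpace ℝ (Fin m) := ⟨φ, hφnorm⟩
  obtain ⟨ρ, hρ⟩ : ∃ ρ : EuclideanSpace ℝ (Fin m) →ₗᵢ[ℝ] EuclideanSpace ℝ (Fin m),
      ∀ x, ρ (eLin B x) = eLin A x := by
    refine ⟨L.extend, fun x => ?_⟩
    have := L.extend_apply ⟨eLin B x, LinearMap.mem_range_self _ x⟩
    rw [this]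
    exact hφ x
  clear hφ hφnorm L φ
  have hi : ∀ u v : EuclideanSpace ℝ (Fin m), (ρ u) ⬝ᵥ (ρ v) = u ⬝ᵥ v := by
    intro u v
    have h2 := ρ.inner_map_map u v
    simp only [PiLp.inner_apply, RCLike.inner_apply, conj_trivial] at h2
    simpa [dotProduct, mul_comm] using h2
  obtain ⟨R, hRv⟩ : ∃ R : Matrix (Fin m) (Fin m) ℝ, ∀ x : Fin m → ℝ, R *ᵥ x = ρ (WithLp.toLp 2 x) := by
    refine ⟨LinearMap.toMatrix'
      { toFun := fun x => (ρ (WithLp.toLp 2 x)).ofLp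
        map_add' := fun x y => by simp
        map_smul' := fun c x => by simp }, fun x => ?_⟩
    rw [← Matrix.toLin'_apply, Matrix.toLin'_toMatrix']
    rfl
  refine ⟨R, ?_, ?_⟩
  · ext i j
    have h1 : (Rᵀ * R) i j = (R *ᵥ Pi.single i 1) ⬝ᵥ (R *ᵥ Pi.single j 1) := by
      simp [Matrix.mul_apply, dotProduct, Matrix.mulVec_single, mul_comm]
    rw [h1, hRv, hRv, hi]
    by_cases hij : i = j <;> simp [hij, dotProduct, Pi.single_apply, Matrix.one_apply, eq_comm]
  · apply Matrix.toLin'.injective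
    apply LinearMap.ext
    intro x
    rw [Matrix.toLin'_apply, Matrix.toLin'_apply, ← Matrix.mulVec_mulVec, hRv]
    exact congrArg WithLp.ofLp (hρ (WithLp.toLp 2 x)).symm

noncomputable def dperm {k : ℕ} (f : Fin k → ℝ) : Equiv.Perm (Fin k) :=
  Fin.revPerm.trans (Tuple.sort f)

lemma descSort_eq_comp {k : ℕ} (f : Fin k → ℝ) : descSort f = f ∘ (dperm f) := rfl

lemma descSort_antitone {k : ℕ} (f : Fin k → ℝ) : Antitone (descSort f) := by
  intro i j hij
  exact Tuple.monotone_sort f (Fin.rev_le_rev.mpr hij)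

lemma descSort_nonneg {k : ℕ} (f : Fin k → ℝ) (hf : ∀ i, 0 ≤ f i) (i : Fin k) :
    0 ≤ descSort f i := hf _

lemma descSort_zero {k N : ℕ} (f : Fin k → ℝ) (hf : ∀ i, 0 ≤ f i)
    (hcard : Fintype.card {i // f i ≠ 0} ≤ N) :
    ∀ i : Fin k, N ≤ (i : ℕ) → descSort f i = 0 := by
  intro i hi
  by_contra hne
  have hpos : 0 < descSort f i := lt_of_le_of_ne (descSort_nonneg f hf i) (Ne.symm hne)
  have hsub : Finset.Iic i ⊆ Finset.univ.filter (fun j => descSort f j ≠ 0) := by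
    intro j hj
    rw [Finset.mem_Iic] at hj
    exact Finset.mem_filter.mpr ⟨Finset.mem_univ _,
      ne_of_gt (lt_of_lt_of_le hpos (descSort_antitone f hj))⟩
  have h1 : (i : ℕ) + 1 ≤ (Finset.univ.filter (fun j => descSort f j ≠ 0)).card := by
    calc (i : ℕ) + 1 = (Finset.Iic i).card := (Fin.card_Iic i).symm
    _ ≤ _ := Finset.card_le_card hsub
  have h2 : (Finset.univ.filter (fun j => descSort f j ≠ 0)).card
      = Fintype.card {i // f i ≠ 0} := by
    rw [← Fintype.card_subtype]
    exact Fintype.card_congr ((dperm f).subtypeEquiv (fun j => by simp [descSort_eq_comp]))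
  omega

lemma conjT_eq_transpose {a b : ℕ} (M : Matrix (Fin a) (Fin b) ℝ) : Mᴴ = Mᵀ := by
  ext i j; simp [Matrix.conjTranspose_apply]

lemma eig_congr {r : ℕ} {H K : Matrix (Fin r) (Fin r) ℝ} (hH : H.IsHermitian) (hK : K.IsHermitian)
    (h : H = K) : hH.eigenvalues = hK.eigenvalues := by
  subst h; rfl

lemma sigCol_congr {m n r : ℕ} (U : Matrix (Fin m) (Fin r) ℝ) (V : Matrix (Fin n) (Fin r) ℝ)
    (h : Uᵀ * U = Vᵀ * V) : sigCol U = sigCol V := by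
  unfold sigCol
  rw [eig_congr (Matrix.isHermitian_transpose_mul_self U)
    (Matrix.isHermitian_transpose_mul_self V) h]

lemma eig_nonneg {a r : ℕ} (X : Matrix (Fin a) (Fin r) ℝ) (i : Fin r) :
    0 ≤ (Matrix.isHermitian_transpose_mul_self X).eigenvalues i := by
  have h : (Xᴴ * X).PosSemidef := Matrix.posSemidef_conjTranspose_mul_self X
  rw [conjT_eq_transpose] at h
  exact h.eigenvalues_nonneg i

lemma sigCol_nonneg {a r : ℕ} (X : Matrix (Fin a) (Fin r) ℝ) (i : Fin r) :
    0 ≤ sigCol X i :=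
  descSort_nonneg _ (fun _ => Real.sqrt_nonneg _) i

lemma sigCol_zero {a r : ℕ} (X : Matrix (Fin a) (Fin r) ℝ) :
    ∀ i : Fin r, a ≤ (i : ℕ) → sigCol X i = 0 := by
  set hH := Matrix.isHermitian_transpose_mul_self X
  apply descSort_zero _ (fun _ => Real.sqrt_nonneg _)
  have h1 : ∀ i, Real.sqrt (hH.eigenvalues i) ≠ 0 ↔ hH.eigenvalues i ≠ 0 := by
    intro i
    rw [not_iff_not]
    constructor
    · intro hs
      have := eig_nonneg X i
      nlinarith [Real.sq_sqrt this, hs]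
    · intro h0; rw [h0, Real.sqrt_zero]
  calc Fintype.card {i // Real.sqrt (hH.eigenvalues i) ≠ 0}
      = Fintype.card {i // hH.eigenvalues i ≠ 0} :=
        Fintype.card_congr (Equiv.subtypeEquiv (Equiv.refl _) (fun i => by simp [h1 i]))
    _ = (Xᵀ * X).rank := (hH.rank_eq_card_non_zero_eigs).symm
    _ = X.rank := X.rank_transpose_mul_self
    _ ≤ Fintype.card (Fin a) := X.rank_le_card_height
    _ = a := Fintype.card_fin a

lemma rdg_gram {a r : ℕ} (x : Fin r → ℝ) (hx : ∀ i : Fin r, a ≤ (i : ℕ) → x i = 0) :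
    (rdg a r x)ᵀ * rdg a r x = Matrix.diagonal (fun i => x i ^ 2) := by
  ext j j'
  rw [Matrix.mul_apply]
  simp only [Matrix.transpose_apply, rdg, Matrix.of_apply]
  by_cases hj : (j : ℕ) < a
  · rw [Finset.sum_eq_single ⟨(j : ℕ), hj⟩]
    · by_cases hjj : j = j'
      · subst hjj
        simp [Matrix.diagonal_apply, j.isLt, pow_two]
      · have : ¬((j : ℕ) = (j' : ℕ)) := fun hc => hjj (Fin.ext hc)
        simp [Matrix.diagonal_apply, hjj, this, j.isLt]
    · intro i _ hi
      have h1 : ¬((i : ℕ) = (j : ℕ)) := fun hc => hi (by ext; exact hc)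
      simp [h1]
    · intro h; exact absurd (Finset.mem_univ _) h
  · have hxj : x j = 0 := hx j (le_of_not_gt hj)
    have hrhs : Matrix.diagonal (fun i => x i ^ 2) j j' = 0 := by
      by_cases hjj : j = j'
      · subst hjj; simp [Matrix.diagonal_apply, hxj]
      · simp [Matrix.diagonal_apply, hjj]
    rw [hrhs]
    apply Finset.sum_eq_zero
    intro i _
    have h1 : ¬((i : ℕ) = (j : ℕ)) := by
      intro hc; exact hj (hc ▸ i.isLt)
    simp [h1]

/-- Sorted spectral decomposition of the Gram matrix. -/
lemma gram_spectral {a r : ℕ} (X : Matrix (Fin a) (Fin r) ℝ) :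
    ∃ Q : Matrix (Fin r) (Fin r) ℝ, IsOrth Q ∧
      Xᵀ * X = Q * Matrix.diagonal (fun i => sigCol X i ^ 2) * Qᵀ := by
  set hH := Matrix.isHermitian_transpose_mul_self X with hhH
  set μ := hH.eigenvalues with hμ
  set f : Fin r → ℝ := fun i => Real.sqrt (μ i) with hf
  set τ := dperm f with hτ
  have hsig : ∀ i, sigCol X i = f (τ i) := fun i => rfl
  have hsq : (fun i => sigCol X i ^ 2) = μ ∘ τ := by
    funext i
    simp only [hsig, hf, Function.comp_apply]
    exact Real.sq_sqrt (eig_nonneg X (τ i))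
  set Q0 : Matrix (Fin r) (Fin r) ℝ :=
    (Matrix.IsHermitian.eigenvectorUnitary hH : Matrix (Fin r) (Fin r) ℝ) with hQ0
  have horth0 : Q0ᵀ * Q0 = 1 := by
    rw [← conjT_eq_transpose]
    exact (Matrix.mem_unitaryGroup_iff'.mp (Matrix.IsHermitian.eigenvectorUnitary hH).2)
  have hspec : Xᵀ * X = Q0 * Matrix.diagonal μ * Q0ᵀ := by
    have h0 := hH.spectral_theorem
    rw [← conjT_eq_transpose Q0, ← Matrix.star_eq_conjTranspose]
    simpa [RCLike.ofReal_real_eq_id] using h0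
  refine ⟨Q0.submatrix id τ, ?_, ?_⟩
  · unfold IsOrth
    have h1 : (Q0.submatrix id τ)ᵀ = Q0ᵀ.submatrix τ id := rfl
    rw [h1, ← Matrix.submatrix_mul Q0ᵀ Q0 ⇑τ id ⇑τ Function.bijective_id, horth0]
    ext i j
    simp [Matrix.submatrix_apply, Matrix.one_apply, τ.injective.eq_iff]
  · rw [hsq]
    have hdiag : Matrix.diagonal (μ ∘ τ) = (Matrix.diagonal μ).submatrix τ τ := by
      ext i j
      by_cases hij : i = j
      · simp [hij, Matrix.diagonal_apply]
      · have : τ i ≠ τ j := fun hc => hij (τ.injective hc)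
        simp [Matrix.diagonal_apply, hij, this]
    have h1 : (Q0.submatrix id τ)ᵀ = Q0ᵀ.submatrix τ id := rfl
    rw [hdiag, h1, ← Matrix.submatrix_mul Q0 (Matrix.diagonal μ) id ⇑τ ⇑τ τ.bijective,
      ← Matrix.submatrix_mul (Q0 * Matrix.diagonal μ) Q0ᵀ id ⇑τ id τ.bijective,
      Matrix.submatrix_id_id, hspec]

lemma factor_gram {n r : ℕ} (P : Matrix (Fin n) (Fin n) ℝ) (D : Matrix (Fin n) (Fin r) ℝ)
    (Q : Matrix (Fin r) (Fin r) ℝ) (hP : Pᵀ * P = 1) :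
    (P * D * Qᵀ)ᵀ * (P * D * Qᵀ) = Q * (Dᵀ * D) * Qᵀ := by
  simp only [Matrix.transpose_mul, Matrix.transpose_transpose, Matrix.mul_assoc]
  rw [← Matrix.mul_assoc Pᵀ P, hP, Matrix.one_mul]

lemma sandwich {r : ℕ} (Q : Matrix (Fin r) (Fin r) ℝ) (M : Matrix (Fin r) (Fin r) ℝ)
    (hQ : Qᵀ * Q = 1) : Qᵀ * (Q * M * Qᵀ) * Q = M := by
  simp only [Matrix.mul_assoc]
  rw [hQ, Matrix.mul_one, ← Matrix.mul_assoc Qᵀ Q, hQ, Matrix.one_mul]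

theorem balanced_pair_iff (m n r : ℕ)
    (U : Matrix (Fin m) (Fin r) ℝ) (V : Matrix (Fin n) (Fin r) ℝ) :
    Uᵀ * U = Vᵀ * V ↔
      (sigCol U = sigCol V ∧
        ∀ (P : Matrix (Fin n) (Fin n) ℝ) (Q : Matrix (Fin r) (Fin r) ℝ),
          IsOrth P → IsOrth Q → V = P * rdg n r (sigCol V) * Qᵀ →
          ∃ R : Matrix (Fin m) (Fin m) ℝ, IsOrth R ∧ U = R * rdg m r (sigCol U) * Qᵀ) := by
  have hDU : (rdg m r (sigCol U))ᵀ * rdg m r (sigCol U)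
      = Matrix.diagonal (fun i => sigCol U i ^ 2) := rdg_gram _ (sigCol_zero U)
  have hDV : (rdg n r (sigCol V))ᵀ * rdg n r (sigCol V)
      = Matrix.diagonal (fun i => sigCol V i ^ 2) := rdg_gram _ (sigCol_zero V)
  constructor
  · intro h
    have σeq : sigCol U = sigCol V := sigCol_congr U V h
    refine ⟨σeq, ?_⟩
    intro P Q hP hQ hV
    have hQQ : Q * Qᵀ = 1 := mul_eq_one_comm.mp hQ
    have hVV : Vᵀ * V = Q * Matrix.diagonal (fun i => sigCol V i ^ 2) * Qᵀ := by
      conv_lhs => rw [hV]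
      rw [factor_gram P _ Q hP, hDV]
    have hgram : (U * Q)ᵀ * (U * Q)
        = (rdg m r (sigCol U))ᵀ * rdg m r (sigCol U) := by
      rw [hDU]
      calc (U * Q)ᵀ * (U * Q) = Qᵀ * (Uᵀ * U) * Q := by
            simp only [Matrix.transpose_mul, Matrix.mul_assoc]
        _ = Qᵀ * (Q * Matrix.diagonal (fun i => sigCol V i ^ 2) * Qᵀ) * Q := by rw [h, hVV]
        _ = Matrix.diagonal (fun i => sigCol V i ^ 2) := sandwich Q _ hQ
        _ = Matrix.diagonal (fun i => sigCol U i ^ 2) := by rw [σeq]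
    obtain ⟨R, hR, hUQ⟩ := exists_orth_factor (U * Q) (rdg m r (sigCol U)) hgram
    refine ⟨R, hR, ?_⟩
    calc U = U * (Q * Qᵀ) := by rw [hQQ, Matrix.mul_one]
      _ = U * Q * Qᵀ := by rw [Matrix.mul_assoc]
      _ = R * rdg m r (sigCol U) * Qᵀ := by rw [hUQ]
  · rintro ⟨σeq, hyp⟩
    obtain ⟨Q, hQ, hspec⟩ := gram_spectral V
    have hQQ : Q * Qᵀ = 1 := mul_eq_one_comm.mp hQ
    have hgram : (V * Q)ᵀ * (V * Q)
        = (rdg n r (sigCol V))ᵀ * rdg n r (sigCol V) := by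
      rw [hDV]
      calc (V * Q)ᵀ * (V * Q) = Qᵀ * (Vᵀ * V) * Q := by
            simp only [Matrix.transpose_mul, Matrix.mul_assoc]
        _ = Qᵀ * (Q * Matrix.diagonal (fun i => sigCol V i ^ 2) * Qᵀ) * Q := by rw [← hspec]
        _ = Matrix.diagonal (fun i => sigCol V i ^ 2) := sandwich Q _ hQ
    obtain ⟨P, hPorth, hVQ⟩ := exists_orth_factor (V * Q) _ hgram
    have hVfact : V = P * rdg n r (sigCol V) * Qᵀ := by
      calc V = V * (Q * Qᵀ) := by rw [hQQ, Matrix.mul_one]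
        _ = V * Q * Qᵀ := by rw [Matrix.mul_assoc]
        _ = P * rdg n r (sigCol V) * Qᵀ := by rw [hVQ]
    obtain ⟨R, hR, hU⟩ := hyp P Q hPorth hQ hVfact
    rw [hU, hspec, factor_gram R _ Q hR, hDU, σeq]
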